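/- Let n ≥ 0 and t ≥ 1, let P be a graded poset of rank n+1, and let R = Rees(P, T_{t,n+1}). Then for every subset S ⊆ {1,…,n}, the flag f-vector entry satisfies f_S(R) = w(S)·f_S(P). -/

import Mathlib

/-- The `t`-analogue `[k] = 1 + t + ⋯ + t^(k-1)`. -/
def tnum (t k : ℕ) : ℕ := ∑ i ∈ Finset.range k, t ^ i

/-- Auxiliary product defining the weight `w`: given the previous entry `p` and the
sorted list of remaining entries, multiply the factors `[s - p + 1]`. -/
def wAux (t : ℕ) : ℕ → List ℕ → ℕ
  | _, [] => 1
  | p, s :: rest => tnum t (s - p + 1) * wAux t s rest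

/-- The weight `w(S) = [s₁]·[s₂-s₁+1]⋯[s_k-s_{k-1}+1]` for `S = {s₁ < ⋯ < s_k}`,
with `w(∅) = 1`. -/
def wWeight (t : ℕ) (S : Finset ℕ) : ℕ := wAux t 1 (S.sort (· ≤ ·))

/-- The weight `v(S) = w(S ∪ {n+1}) - w(S)` for nonempty `S ⊆ {1,…,n}`, and
`v(∅) = t·[n]`. -/
def vWeight (t n : ℕ) (S : Finset ℕ) : ℤ :=
  if S = ∅ then t * tnum t n else (wWeight t (S ∪ {n + 1}) : ℤ) - (wWeight t S : ℤ)

/-- The flag `f`-vector entry `f_S` of a bounded poset with rank function `rk`: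
the number of chains `⊥ < x₁ < ⋯ < x_k < ⊤` whose multiset of ranks is exactly `S`,
encoded as strictly increasing rank-respecting functions `S → β`. -/
noncomputable def flagF {β : Type} [PartialOrder β] [BoundedOrder β] (rk : β → ℕ) (S : Finset ℕ) : ℕ :=
  Nat.card {g : {s : ℕ // s ∈ S} → β //
    (∀ s, rk (g s) = s.val) ∧
    (∀ s s' : {s : ℕ // s ∈ S}, s.val < s'.val → g s < g s') ∧
    (∀ s, ⊥ < g s ∧ g s < ⊤)}

/-- The proper part of the Rees product of a graded poset `(α, rk)` of rank `n+1`
with the `t`-ary tree `T_{t,n+1}`: pairs `(p, w)` with `p ≠ ⊥`, `w` a word of length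
at most `n` over a `t`-letter alphabet, and `|w| ≤ rk p - 1`. -/
def ReesElt (α : Type) [PartialOrder α] [OrderBot α] (rk : α → ℕ) (t n : ℕ) : Type :=
  {pw : α × List (Fin t) // pw.1 ≠ ⊥ ∧ pw.2.length ≤ n ∧ pw.2.length + 1 ≤ rk pw.1}

/-- The Rees order: `(p,w) ≤ (p',w')` iff `p ≤ p'`, `w` is a prefix of `w'`, and
`rk p' - rk p ≥ |w'| - |w|`. -/
instance (α : Type) [PartialOrder α] [OrderBot α] (rk : α → ℕ) (t n : ℕ) :
    PartialOrder (ReesElt α rk t n) where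
  le a b := a.1.1 ≤ b.1.1 ∧ a.1.2 <+: b.1.2 ∧
    rk a.1.1 + b.1.2.length ≤ rk b.1.1 + a.1.2.length
  le_refl a := ⟨le_refl _, List.prefix_refl _, le_refl _⟩
  le_trans a b c hab hbc :=
    ⟨hab.1.trans hbc.1, hab.2.1.trans hbc.2.1, by
      have h1 := hab.2.2; have h2 := hbc.2.2; omega⟩
  le_antisymm a b hab hba := by
    apply Subtype.ext
    have h1 : a.1.1 = b.1.1 := le_antisymm hab.1 hba.1
    have h2 : a.1.2 = b.1.2 := hab.2.1.eq_of_length_le hba.2.1.length_le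
    exact Prod.ext h1 h2

/-- The Rees product `Rees(P, T_{t,n+1})`: the proper part together with an adjoined
minimum `⊥` and maximum `⊤`. -/
abbrev ReesTree (α : Type) [PartialOrder α] [OrderBot α] (rk : α → ℕ) (t n : ℕ) : Type :=
  WithBot (WithTop (ReesElt α rk t n))

/-- The rank function of `Rees(P, T_{t,n+1})`: `ρ(⊥) = 0`, `ρ(⊤) = n+2`, and
`ρ(p,w) = rk p`. -/
noncomputable def reesRank (α : Type) [PartialOrder α] [OrderBot α] (rk : α → ℕ) (t n : ℕ) :
    ReesTree α rk t n → ℕ :=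
  WithBot.recBotCoe 0 (WithTop.recTopCoe (n + 2) (fun a => rk a.1.1))

/-! ### Auxiliary material for the proof -/

section Words

variable (t : ℕ)

/-- Words over a `t`-letter alphabet of length at most `d`. -/
def BWords (d : ℕ) : Type := {w : List (Fin t) // w.length ≤ d}

def bwordsZero : BWords t 0 ≃ Unit where
  toFun _ := ()
  invFun _ := ⟨[], by simp⟩
  left_inv := fun ⟨w, hw⟩ => by
    cases w with
    | nil => rfl
    | cons a l => simp at hw
  right_inv _ := rfl

def bwordsSucc (d : ℕ) : BWords t (d + 1) ≃ Option (Fin t × BWords t d) where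
  toFun := fun x => match x with
    | ⟨[], _⟩ => none
    | ⟨a :: w, h⟩ => some (a, ⟨w, by simpa using h⟩)
  invFun := fun x => match x with
    | none => ⟨[], by simp⟩
    | some (a, ⟨w, h⟩) => ⟨a :: w, by simpa using h⟩
  left_inv := fun x => match x with
    | ⟨[], _⟩ => rfl
    | ⟨a :: w, h⟩ => rfl
  right_inv := fun x => match x with
    | none => rfl
    | some (a, ⟨w, h⟩) => rfl

instance bwordsFinite (d : ℕ) : Finite (BWords t d) := by
  induction d with
  | zero => exact Finite.of_equiv Unit (bwordsZero t).symm
  | succ d ih =>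
    haveI := ih
    haveI := Fintype.ofFinite (BWords t d)
    exact Finite.of_equiv _ (bwordsSucc t d).symm

lemma card_bwords (d : ℕ) : Nat.card (BWords t d) = tnum t (d + 1) := by
  induction d with
  | zero =>
    rw [Nat.card_congr (bwordsZero t)]
    simp [tnum]
  | succ d ih =>
    haveI := Fintype.ofFinite (BWords t d)
    have h2 : tnum t (d + 1 + 1) = t * tnum t (d + 1) + 1 := geom_sum_succ
    rw [Nat.card_congr (bwordsSucc t d), Finite.card_option, Nat.card_prod,
      Nat.card_eq_fintype_card (α := Fin t), Fintype.card_fin, ih, h2]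

end Words

/-- The condition describing systems of words attached to a chain with ranks in `S`. -/
def wsCond (t : ℕ) (S : Finset ℕ) (h : {s : ℕ // s ∈ S} → List (Fin t)) : Prop :=
  (∀ s, (h s).length + 1 ≤ s.val) ∧
  ∀ s s' : {s : ℕ // s ∈ S}, s.val < s'.val →
    (h s <+: h s') ∧ (h s').length + s.val ≤ (h s).length + s'.val

/-- Systems of words attached to a chain with ranks in `S`. -/
def WS (t : ℕ) (S : Finset ℕ) : Type :=
  {h : {s : ℕ // s ∈ S} → List (Fin t) // wsCond t S h}

/-- The maximum of `S`, defaulting to `1` for the empty set. -/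
def maxD (S : Finset ℕ) : ℕ := if hne : S.Nonempty then S.max' hne else 1

lemma maxD_le {a : ℕ} {S : Finset ℕ} (ha : ∀ x ∈ S, x < a) (h1a : 1 ≤ a) : maxD S ≤ a := by
  rw [maxD]
  split
  · next hne => exact le_of_lt (ha _ (S.max'_mem hne))
  · exact h1a

/-- The word attached to the maximum of `S` (or `[]` if `S = ∅`). -/
def topw {t : ℕ} {S : Finset ℕ} (h : {s : ℕ // s ∈ S} → List (Fin t)) : List (Fin t) :=
  if hne : S.Nonempty then h ⟨S.max' hne, S.max'_mem hne⟩ else []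

lemma topw_len {t : ℕ} {S : Finset ℕ} {h : {s : ℕ // s ∈ S} → List (Fin t)}
    (hc : wsCond t S h) : (topw h).length + 1 ≤ maxD S := by
  rw [topw, maxD]
  split
  · next hne => exact hc.1 _
  · simp

lemma topw_spec {t : ℕ} {S : Finset ℕ} {h : {s : ℕ // s ∈ S} → List (Fin t)}
    (hc : wsCond t S h) (s : {s : ℕ // s ∈ S}) :
    h s <+: topw h ∧ (topw h).length + s.val ≤ (h s).length + maxD S := by
  have hne : S.Nonempty := ⟨s.val, s.2⟩
  rw [topw, dif_pos hne, maxD, dif_pos hne]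
  rcases lt_or_eq_of_le (S.le_max' s.val s.2) with hlt | heq
  · exact hc.2 s ⟨_, S.max'_mem hne⟩ hlt
  · have hs : s = ⟨S.max' hne, S.max'_mem hne⟩ := Subtype.ext heq
    rw [hs]
    exact ⟨List.prefix_refl _, le_rfl⟩

section InsertEquiv

variable (t : ℕ) {a : ℕ} {S : Finset ℕ}

/-- Restriction of a word system on `insert a S` to `S`. -/
def wsRestr (h : WS t (insert a S)) : WS t S :=
  ⟨fun s => h.1 ⟨s.val, Finset.mem_insert_of_mem s.2⟩,
   fun s => h.2.1 _, fun s s' hss => h.2.2 _ _ hss⟩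

lemma topw_restr_key (ha : ∀ x ∈ S, x < a) (h : WS t (insert a S)) :
    (h.1 ⟨a, Finset.mem_insert_self a S⟩).length + maxD S ≤
      (topw (wsRestr t h).1).length + a := by
  by_cases hne : S.Nonempty
  · have hm := S.max'_mem hne
    have key := (h.2.2 ⟨S.max' hne, Finset.mem_insert_of_mem hm⟩
      ⟨a, Finset.mem_insert_self a S⟩ (ha _ hm)).2
    rw [maxD, dif_pos hne, topw, dif_pos hne]
    exact key
  · rw [maxD, dif_neg hne, topw, dif_neg hne]
    have h2 : (h.1 ⟨a, Finset.mem_insert_self a S⟩).length + 1 ≤ a := h.2.1 _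
    simp only [List.length_nil]
    omega

lemma topw_restr_prefix (ha : ∀ x ∈ S, x < a) (h : WS t (insert a S)) :
    topw (wsRestr t h).1 <+: h.1 ⟨a, Finset.mem_insert_self a S⟩ := by
  by_cases hne : S.Nonempty
  · have hm := S.max'_mem hne
    rw [topw, dif_pos hne]
    exact (h.2.2 ⟨S.max' hne, Finset.mem_insert_of_mem hm⟩
      ⟨a, Finset.mem_insert_self a S⟩ (ha _ hm)).1
  · rw [topw, dif_neg hne]
    exact List.nil_prefix

/-- One step of the recursive decomposition of word systems. -/
def wsInsertEquiv (ha : ∀ x ∈ S, x < a) (h1a : 1 ≤ a) :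
    WS t (insert a S) ≃ WS t S × BWords t (a - maxD S) where
  toFun h :=
    (wsRestr t h,
     ⟨(h.1 ⟨a, Finset.mem_insert_self a S⟩).drop (topw (wsRestr t h).1).length, by
        have key := topw_restr_key t ha h
        rw [List.length_drop]
        omega⟩)
  invFun p :=
    ⟨fun s => if hs : s.val ∈ S then p.1.1 ⟨s.val, hs⟩ else topw p.1.1 ++ p.2.1, by
      constructor
      · intro s
        dsimp only
        by_cases hs : s.val ∈ S
        · rw [dif_pos hs]
          exact p.1.2.1 ⟨s.val, hs⟩
        · rw [dif_neg hs]
          have hsa : s.val = a := by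
            rcases Finset.mem_insert.mp s.2 with h | h
            · exact h
            · exact absurd h hs
          have l1 := topw_len p.1.2
          have l2 := p.2.2
          have l3 := maxD_le ha h1a
          rw [List.length_append]
          omega
      · intro s s' hss
        dsimp only
        by_cases hs' : s'.val ∈ S
        · have hs : s.val ∈ S := by
            rcases Finset.mem_insert.mp s.2 with h | h
            · exfalso; have := ha s'.val hs'; omega
            · exact h
          rw [dif_pos hs, dif_pos hs']
          exact p.1.2.2 ⟨s.val, hs⟩ ⟨s'.val, hs'⟩ hss
        · have hs'a : s'.val = a := by
            rcases Finset.mem_insert.mp s'.2 with h | h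
            · exact h
            · exact absurd h hs'
          have hs : s.val ∈ S := by
            rcases Finset.mem_insert.mp s.2 with h | h
            · omega
            · exact h
          rw [dif_pos hs, dif_neg hs']
          constructor
          · exact ((topw_spec p.1.2 ⟨s.val, hs⟩).1).trans (List.prefix_append _ _)
          · have k1 : (topw p.1.1).length + s.val ≤ (p.1.1 ⟨s.val, hs⟩).length + maxD S :=
              (topw_spec p.1.2 ⟨s.val, hs⟩).2
            have k2 := p.2.2
            have k3 := maxD_le ha h1a
            rw [List.length_append]
            omega⟩
  left_inv h := by
    apply Subtype.ext
    funext s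
    dsimp only
    by_cases hs : s.val ∈ S
    · rw [dif_pos hs]
      exact congrArg h.1 (Subtype.ext rfl)
    · rw [dif_neg hs]
      have hsa : s.val = a := by
        rcases Finset.mem_insert.mp s.2 with h' | h'
        · exact h'
        · exact absurd h' hs
      have hse : s = ⟨a, Finset.mem_insert_self a S⟩ := Subtype.ext hsa
      obtain ⟨r, hr⟩ := topw_restr_prefix t ha h
      rw [hse, ← hr, List.drop_left]
  right_inv p := by
    have haS : a ∉ S := fun h' => lt_irrefl a (ha a h')
    have hfun : ∀ pf : wsCond t (insert a S)
        (fun s => if hs : s.val ∈ S then p.1.1 ⟨s.val, hs⟩ else topw p.1.1 ++ p.2.1),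
        (wsRestr t (⟨fun s => if hs : s.val ∈ S then p.1.1 ⟨s.val, hs⟩
            else topw p.1.1 ++ p.2.1, pf⟩ : WS t (insert a S))).1 = p.1.1 := by
      intro pf
      funext s
      show (if hs : (s : ℕ) ∈ S then p.1.1 ⟨(s : ℕ), hs⟩ else topw p.1.1 ++ p.2.1) = p.1.1 s
      rw [dif_pos s.2]
    refine Prod.ext (Subtype.ext (hfun _)) (Subtype.ext ?_)
    dsimp only
    simp only [hfun, dif_neg haS, List.drop_left]
    exact List.drop_left' (congrArg (fun h => (topw h).length) (hfun _)).symm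

end InsertEquiv

lemma sort_insert_max (a : ℕ) (S : Finset ℕ) (ha : ∀ x ∈ S, x < a) :
    (insert a S).sort (· ≤ ·) = S.sort (· ≤ ·) ++ [a] := by
  have haS : a ∉ S := fun h => lt_irrefl a (ha a h)
  refine (fun h1 h2 h3 => List.Perm.eq_of_pairwise' (r := (· ≤ ·)) h2 h3 h1) ?_ ?_ ?_
  · exact (Finset.sort_perm_toList _ _).trans
      ((Finset.toList_insert haS).trans
        (((Finset.sort_perm_toList S (· ≤ ·)).symm.cons a).trans
          (List.perm_append_singleton a _).symm))
  · exact Finset.pairwise_sort _ _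
  · rw [List.pairwise_append]
    refine ⟨Finset.pairwise_sort _ _, List.pairwise_singleton _ _, ?_⟩
    intro x hx b hb
    rw [List.mem_singleton] at hb
    subst hb
    exact le_of_lt (ha x (Finset.mem_sort (α := ℕ) (· ≤ ·) |>.mp hx))

lemma getLastD_sort (S : Finset ℕ) : (S.sort (· ≤ ·)).getLastD 1 = maxD S := by
  induction S using Finset.induction_on_max with
  | empty => simp [maxD, Finset.not_nonempty_empty]
  | insert a S ha ih =>
    rw [sort_insert_max a S ha, List.getLastD_concat, maxD,
      dif_pos (Finset.insert_nonempty a S)]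
    symm
    apply le_antisymm
    · apply Finset.max'_le
      intro x hx
      rcases Finset.mem_insert.mp hx with h | h
      · exact le_of_eq h
      · exact le_of_lt (ha x h)
    · exact Finset.le_max' _ a (Finset.mem_insert_self a S)

lemma wAux_concat (t a : ℕ) : ∀ (L : List ℕ) (p : ℕ),
    wAux t p (L ++ [a]) = wAux t p L * tnum t (a - L.getLastD p + 1)
  | [], p => by simp [wAux]
  | s :: L, p => by
    rw [List.cons_append, wAux, wAux, wAux_concat t a L s, List.getLastD_cons, mul_assoc]

lemma wWeight_insert (t a : ℕ) (S : Finset ℕ) (ha : ∀ x ∈ S, x < a) :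
    wWeight t (insert a S) = wWeight t S * tnum t (a - maxD S + 1) := by
  rw [wWeight, wWeight, sort_insert_max a S ha, wAux_concat, getLastD_sort]

lemma card_WS (t : ℕ) (S : Finset ℕ) (h1 : ∀ x ∈ S, 1 ≤ x) :
    Nat.card (WS t S) = wWeight t S := by
  induction S using Finset.induction_on_max with
  | empty =>
    have e : WS t ∅ ≃ Unit :=
      { toFun := fun _ => ()
        invFun := fun _ => ⟨fun s => [],
          ⟨fun s => absurd s.2 (Finset.notMem_empty _),
           fun s _ _ => absurd s.2 (Finset.notMem_empty _)⟩⟩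
        left_inv := fun h => Subtype.ext (funext fun s => absurd s.2 (Finset.notMem_empty _))
        right_inv := fun _ => rfl }
    rw [Nat.card_congr e]
    simp [wWeight, wAux]
  | insert a S ha ih =>
    have h1a : 1 ≤ a := h1 a (Finset.mem_insert_self a S)
    rw [Nat.card_congr (wsInsertEquiv t ha h1a), Nat.card_prod,
      ih (fun x hx => h1 x (Finset.mem_insert_of_mem hx)), card_bwords,
      wWeight_insert t a S ha]

section Rees

variable {α : Type} [PartialOrder α] [BoundedOrder α] (rk : α → ℕ) (t n : ℕ)

/-- Extract the poset component of an element of the Rees tree. -/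
def getP : ReesTree α rk t n → α :=
  WithBot.recBotCoe ⊥ (WithTop.recTopCoe ⊥ fun a => a.1.1)

/-- Extract the word component of an element of the Rees tree. -/
def getW : ReesTree α rk t n → List (Fin t) :=
  WithBot.recBotCoe [] (WithTop.recTopCoe [] fun a => a.1.2)

/-- Embed a proper element into the Rees tree. -/
def mkRees (e : ReesElt α rk t n) : ReesTree α rk t n :=
  ((e : WithTop (ReesElt α rk t n)) : ReesTree α rk t n)

lemma ReesElt.le_def {a b : ReesElt α rk t n} :
    a ≤ b ↔ (a.1.1 ≤ b.1.1 ∧ a.1.2 <+: b.1.2 ∧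
      rk a.1.1 + b.1.2.length ≤ rk b.1.1 + a.1.2.length) := Iff.rfl

lemma rees_exists (x : ReesTree α rk t n) (h1 : ⊥ < x) (h2 : x < ⊤) :
    ∃ a : ReesElt α rk t n, x = mkRees rk t n a := by
  induction x using WithBot.recBotCoe with
  | bot => exact absurd h1 (lt_irrefl _)
  | coe y =>
    induction y using WithTop.recTopCoe with
    | top => exact absurd h2 (lt_irrefl _)
    | coe a => exact ⟨a, rfl⟩

lemma mkRees_lt_mkRees {a b : ReesElt α rk t n} :
    mkRees rk t n a < mkRees rk t n b ↔ a < b := by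
  rw [mkRees, mkRees, WithBot.coe_lt_coe, WithTop.coe_lt_coe]

lemma coe_getPW (x : ReesTree α rk t n) (h1 : ⊥ < x) (h2 : x < ⊤)
    (hp : getP rk t n x ≠ ⊥ ∧ (getW rk t n x).length ≤ n ∧
      (getW rk t n x).length + 1 ≤ rk (getP rk t n x)) :
    mkRees rk t n ⟨(getP rk t n x, getW rk t n x), hp⟩ = x := by
  obtain ⟨a, rfl⟩ := rees_exists rk t n x h1 h2
  rfl

/-- The decomposition of flagged chains in the Rees poset. -/
def reesEquiv (hbot : rk ⊥ = 0) (htop : rk ⊤ = n + 1) (S : Finset ℕ)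
    (hs1 : ∀ x ∈ S, 1 ≤ x) (hsn : ∀ x ∈ S, x ≤ n) :
    {g : {s : ℕ // s ∈ S} → ReesTree α rk t n //
      (∀ s, reesRank α rk t n (g s) = s.val) ∧
      (∀ s s' : {s : ℕ // s ∈ S}, s.val < s'.val → g s < g s') ∧
      (∀ s, ⊥ < g s ∧ g s < ⊤)} ≃
    {f : {s : ℕ // s ∈ S} → α //
      (∀ s, rk (f s) = s.val) ∧
      (∀ s s' : {s : ℕ // s ∈ S}, s.val < s'.val → f s < f s') ∧
      (∀ s, ⊥ < f s ∧ f s < ⊤)} × WS t S where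
  toFun g :=
    (⟨fun s => getP rk t n (g.1 s),
      by
        intro s
        obtain ⟨x, hx⟩ := rees_exists rk t n (g.1 s) (g.2.2.2 s).1 (g.2.2.2 s).2
        have hr := g.2.1 s
        rw [hx] at hr
        show rk (getP rk t n (g.1 s)) = (s : ℕ)
        rw [hx]
        exact hr,
      by
        intro s s' hss
        obtain ⟨x, hx⟩ := rees_exists rk t n (g.1 s) (g.2.2.2 s).1 (g.2.2.2 s).2
        obtain ⟨y, hy⟩ := rees_exists rk t n (g.1 s') (g.2.2.2 s').1 (g.2.2.2 s').2
        have hlt := g.2.2.1 s s' hss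
        rw [hx, hy] at hlt
        have hxy : x < y := (mkRees_lt_mkRees rk t n).mp hlt
        have hr2 : rk x.1.1 = (s : ℕ) := by
          have := g.2.1 s; rw [hx] at this; exact this
        have hr2' : rk y.1.1 = (s' : ℕ) := by
          have := g.2.1 s'; rw [hy] at this; exact this
        show getP rk t n (g.1 s) < getP rk t n (g.1 s')
        rw [hx, hy]
        show x.1.1 < y.1.1
        exact lt_of_le_of_ne ((ReesElt.le_def rk t n).mp hxy.le).1
          (fun e => by rw [e, hr2'] at hr2; omega),
      by
        intro s
        obtain ⟨x, hx⟩ := rees_exists rk t n (g.1 s) (g.2.2.2 s).1 (g.2.2.2 s).2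
        have hr2 : rk x.1.1 = (s : ℕ) := by
          have := g.2.1 s; rw [hx] at this; exact this
        show ⊥ < getP rk t n (g.1 s) ∧ getP rk t n (g.1 s) < ⊤
        rw [hx]
        constructor
        · show (⊥ : α) < x.1.1
          apply bot_lt_iff_ne_bot.mpr
          intro e
          rw [e, hbot] at hr2
          have := hs1 s.1 s.2
          omega
        · show x.1.1 < (⊤ : α)
          apply lt_top_iff_ne_top.mpr
          intro e
          rw [e, htop] at hr2
          have := hsn s.1 s.2
          omega⟩,
     ⟨fun s => getW rk t n (g.1 s),
      by
        intro s
        obtain ⟨x, hx⟩ := rees_exists rk t n (g.1 s) (g.2.2.2 s).1 (g.2.2.2 s).2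
        have hr2 : rk x.1.1 = (s : ℕ) := by
          have := g.2.1 s; rw [hx] at this; exact this
        show (getW rk t n (g.1 s)).length + 1 ≤ (s : ℕ)
        rw [hx]
        show x.1.2.length + 1 ≤ (s : ℕ)
        have := x.2.2.2
        omega,
      by
        intro s s' hss
        obtain ⟨x, hx⟩ := rees_exists rk t n (g.1 s) (g.2.2.2 s).1 (g.2.2.2 s).2
        obtain ⟨y, hy⟩ := rees_exists rk t n (g.1 s') (g.2.2.2 s').1 (g.2.2.2 s').2
        have hlt := g.2.2.1 s s' hss
        rw [hx, hy] at hlt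
        have hxy : x < y := (mkRees_lt_mkRees rk t n).mp hlt
        have hr2 : rk x.1.1 = (s : ℕ) := by
          have := g.2.1 s; rw [hx] at this; exact this
        have hr2' : rk y.1.1 = (s' : ℕ) := by
          have := g.2.1 s'; rw [hy] at this; exact this
        have hle := (ReesElt.le_def rk t n).mp hxy.le
        show getW rk t n (g.1 s) <+: getW rk t n (g.1 s') ∧
          (getW rk t n (g.1 s')).length + (s : ℕ) ≤ (getW rk t n (g.1 s)).length + (s' : ℕ)
        rw [hx, hy]
        refine ⟨hle.2.1, ?_⟩
        have h3 := hle.2.2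
        show y.1.2.length + (s : ℕ) ≤ x.1.2.length + (s' : ℕ)
        omega⟩)
  invFun fh :=
    ⟨fun s => mkRees rk t n ⟨(fh.1.1 s, fh.2.1 s),
        ⟨by
          have hr := fh.1.2.1 s
          intro e
          have e' : fh.1.1 s = ⊥ := e
          rw [e', hbot] at hr
          have := hs1 s.1 s.2
          omega,
         by
          show (fh.2.1 s).length ≤ n
          have h2 := fh.2.2.1 s
          have := hsn s.1 s.2
          omega,
         by
          show (fh.2.1 s).length + 1 ≤ rk (fh.1.1 s)
          rw [fh.1.2.1 s]
          exact fh.2.2.1 s⟩⟩,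
     fun s => fh.1.2.1 s,
     by
      intro s s' hss
      dsimp only
      apply (mkRees_lt_mkRees rk t n).mpr
      refine lt_of_le_of_ne ((ReesElt.le_def rk t n).mpr
        ⟨(fh.1.2.2.1 s s' hss).le, (fh.2.2.2 s s' hss).1, ?_⟩) ?_
      · show rk (fh.1.1 s) + (fh.2.1 s').length ≤ rk (fh.1.1 s') + (fh.2.1 s).length
        have h3 := (fh.2.2.2 s s' hss).2
        rw [fh.1.2.1 s, fh.1.2.1 s']
        omega
      · intro e
        have h4 : fh.1.1 s = fh.1.1 s' := congrArg (fun z => z.1.1) e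
        exact absurd h4 (ne_of_lt (fh.1.2.2.1 s s' hss)),
     fun s => ⟨WithBot.bot_lt_coe _, WithBot.coe_lt_coe.mpr (WithTop.coe_lt_top _)⟩⟩
  left_inv g :=
    Subtype.ext (funext fun s =>
      coe_getPW rk t n (g.1 s) (g.2.2.2 s).1 (g.2.2.2 s).2 _)
  right_inv fh := rfl

end Rees

theorem statement1 (n t : ℕ) (ht : 1 ≤ t)
    (α : Type) [Fintype α] [PartialOrder α] [BoundedOrder α]
    (rk : α → ℕ) (hbot : rk ⊥ = 0) (htop : rk ⊤ = n + 1)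
    (hcov : ∀ x y : α, x ⋖ y → rk y = rk x + 1)
    (S : Finset ℕ) (hS : S ⊆ Finset.Icc 1 n) :
    flagF (reesRank α rk t n) S = wWeight t S * flagF rk S := by
  have hs1 : ∀ x ∈ S, 1 ≤ x := fun x hx => (Finset.mem_Icc.mp (hS hx)).1
  have hsn : ∀ x ∈ S, x ≤ n := fun x hx => (Finset.mem_Icc.mp (hS hx)).2
  have e := reesEquiv (α := α) rk t n hbot htop S hs1 hsn
  unfold flagF
  rw [Nat.card_congr e, Nat.card_prod, card_WS t S hs1, mul_comm]
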